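/- For any ε > 0 and any n ≥ 1, the sum of q_n(a_1, …, a_n)^{-(1+ε)} over all tuples (a_1, …, a_n) ∈ ℕ_{≥1}^n satisfying (ε/2)·∑_{j=1}^n log a_j ≥ n·log ζ(1+ε/2) is at most 1, where ζ(t) = ∑_{k=1}^∞ k^{-t}. -/

import Mathlib

open Filter Topology MeasureTheory Set
open scoped ENNReal

/-- The Gauss map `T(x) = 1/x mod 1`, with `T(0) = 0`. -/
noncomputable def gaussMap (x : ℝ) : ℝ := Int.fract x⁻¹

/-- The `n`-th partial quotient (1-indexed): `a₁(x) = ⌊1/x⌋`, `aₙ(x) = a₁(T^[n-1] x)`. -/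
noncomputable def cfA (n : ℕ) (x : ℝ) : ℕ := ⌊(gaussMap^[n - 1] x)⁻¹⌋₊

/-- Denominators of convergents: `q₀ = 1`, `q₁ = a₁`, `qₙ = aₙ q_{n-1} + q_{n-2}`
(from the 1-indexed sequence `a` of partial quotients). -/
def qd (a : ℕ → ℕ) : ℕ → ℕ
  | 0 => 1
  | 1 => a 1
  | n + 2 => a (n + 2) * qd a (n + 1) + qd a n

/-- Numerators of convergents: `p₀ = 0`, `p₁ = 1`, `pₙ = aₙ p_{n-1} + p_{n-2}`. -/
def pd (a : ℕ → ℕ) : ℕ → ℕ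
  | 0 => 0
  | 1 => 1
  | n + 2 => a (n + 2) * pd a (n + 1) + pd a n

/-- The cylinder `Iₙ(a₁, …, aₙ) = {x ∈ [0,1) : a₁(x) = a₁, …, aₙ(x) = aₙ}`. -/
noncomputable def cyl (n : ℕ) (a : ℕ → ℕ) : Set ℝ :=
  {x | x ∈ Set.Ico (0 : ℝ) 1 ∧ ∀ j, 1 ≤ j → j ≤ n → cfA j x = a j}

/-- `E(ψ)`: the set of irrationals in `[0,1)` with `(1/ψ(n)) ∑_{j=1}^n log aⱼ(x) → 1`. -/
noncomputable def Eset (ψ : ℕ → ℕ) : Set ℝ :=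
  {x | x ∈ Set.Ico (0 : ℝ) 1 ∧ Irrational x ∧
    Tendsto (fun n => (∑ j ∈ Finset.Icc 1 n, Real.log (cfA j x)) / (ψ n : ℝ))
      atTop (𝓝 1)}

/-- The Riemann zeta function `ζ(t) = ∑_{k≥1} k^{-t}` as a real series. -/
noncomputable def zetaR (t : ℝ) : ℝ := ∑' (k : ℕ+), (k : ℝ) ^ (-t)

/-- Extend a tuple `(a₁, …, aₙ)` of positive integers to a 1-indexed sequence `ℕ → ℕ`. -/
def seqOf (n : ℕ) (v : Fin n → ℕ+) : ℕ → ℕ :=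
  fun j => if h : 1 ≤ j ∧ j ≤ n then (v ⟨j - 1, by omega⟩ : ℕ) else 1

lemma tsum_pi_prod_aux (f : ℕ+ → ℝ≥0∞) : ∀ n : ℕ,
    ∑' v : Fin n → ℕ+, ∏ j, f (v j) = (∑' k, f k) ^ n := by
  intro n
  induction n with
  | zero =>
    rw [tsum_eq_single (fun i => i.elim0) (fun b hb => absurd (Subsingleton.elim b _) hb)]
    simp
  | succ n ih =>
    rw [← Equiv.tsum_eq (Fin.consEquiv (fun _ => ℕ+))]
    have : ∀ p : ℕ+ × (Fin n → ℕ+),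
        (∏ j, f (((Fin.consEquiv (fun _ => ℕ+)) p) j)) = f p.1 * ∏ j, f (p.2 j) := by
      intro p
      rw [Fin.prod_univ_succ]
      simp [Fin.consEquiv]
    simp_rw [this]
    rw [ENNReal.tsum_prod']
    simp_rw [ENNReal.tsum_mul_left]
    rw [ENNReal.tsum_mul_right, ih, pow_succ']

lemma prod_le_qd_aux (a : ℕ → ℕ) : ∀ n : ℕ, 1 ≤ n →
    ∏ j ∈ Finset.Icc 1 n, a j ≤ qd a n := by
  intro n hn
  induction n, hn using Nat.le_induction with
  | base => simp [qd]
  | succ n hn ih =>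
    obtain ⟨m, rfl⟩ := Nat.exists_eq_add_of_le hn
    rw [Finset.prod_Icc_succ_top (by omega)]
    calc (∏ j ∈ Finset.Icc 1 (1 + m), a j) * a (1 + m + 1)
        ≤ qd a (1 + m) * a (1 + m + 1) :=
          Nat.mul_le_mul_right _ ih
      _ ≤ a (1 + m + 1) * qd a (1 + m) + qd a m := by
          rw [Nat.mul_comm]; omega
      _ = qd a (1 + m + 1) := by
          have h1 : 1 + m + 1 = m + 2 := by omega
          have h2 : 1 + m = m + 1 := by omega
          rw [h1, h2]; rfl

/-- the sum of `qₙ^{-(1+ε)}` over all tuples of positive integers with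
`(ε/2) ∑ log aⱼ ≥ n log ζ(1+ε/2)` is at most `1`. -/
theorem tsum_qd_rpow_le_one (ε : ℝ) (hε : 0 < ε) (n : ℕ) (hn : 1 ≤ n) :
    ∑' (v : {v : Fin n → ℕ+ //
        (n : ℝ) * Real.log (zetaR (1 + ε / 2)) ≤
          ε / 2 * ∑ j, Real.log ((v j : ℕ) : ℝ)}),
      ((qd (seqOf n v.1) n : ℝ≥0∞) ^ (-(1 + ε))) ≤ 1 := by
  set t : ℝ := 1 + ε / 2 with ht
  have ht1 : 1 < t := by rw [ht]; linarith
  -- summability of the zeta series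
  have hsumN : Summable (fun k : ℕ => (k : ℝ) ^ (-t)) :=
    Real.summable_nat_rpow.2 (by linarith)
  have hsum : Summable (fun k : ℕ+ => ((k : ℕ) : ℝ) ^ (-t)) :=
    hsumN.comp_injective PNat.coe_injective
  set Zr : ℝ := zetaR t with hZr
  have hZrsum : Zr = ∑' k : ℕ+, ((k : ℕ) : ℝ) ^ (-t) := rfl
  have hZ1 : 1 ≤ Zr := by
    have := Summable.le_tsum hsum 1 (fun k _ => Real.rpow_nonneg (Nat.cast_nonneg _) _)
    simpa [hZrsum] using this
  have hZr0 : (0:ℝ) < Zr := lt_of_lt_of_le one_pos hZ1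
  set f : ℕ+ → ℝ≥0∞ := fun k => ((k : ℕ) : ℝ≥0∞) ^ (-t) with hf
  set Z : ℝ≥0∞ := ∑' k : ℕ+, f k with hZ
  have hZeq : Z = ENNReal.ofReal Zr := by
    rw [hZ, hZrsum, ENNReal.ofReal_tsum_of_nonneg
      (fun k => Real.rpow_nonneg (Nat.cast_nonneg _) _) hsum]
    refine tsum_congr fun k => ?_
    show ((k : ℕ) : ℝ≥0∞) ^ (-t) = ENNReal.ofReal (((k : ℕ) : ℝ) ^ (-t))
    rw [← ENNReal.ofReal_rpow_of_pos (by exact_mod_cast k.pos), ENNReal.ofReal_natCast]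
  have hZne0 : ENNReal.ofReal Zr ≠ 0 := (ENNReal.ofReal_pos.2 hZr0).ne'
  have hZnetop : ENNReal.ofReal Zr ≠ ⊤ := ENNReal.ofReal_ne_top
  set C : ℝ≥0∞ := (ENNReal.ofReal Zr ^ n)⁻¹ with hC
  -- per-term bound
  have key : ∀ v : {v : Fin n → ℕ+ //
        (n : ℝ) * Real.log (zetaR (1 + ε / 2)) ≤
          ε / 2 * ∑ j, Real.log ((v j : ℕ) : ℝ)},
      ((qd (seqOf n v.1) n : ℝ≥0∞) ^ (-(1 + ε))) ≤ C * ∏ j, f (v.1 j) := by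
    rintro ⟨v, hv⟩
    set a : ℕ → ℕ := seqOf n v with ha
    set q : ℕ := qd a n with hqdef
    set P : ℕ := ∏ j : Fin n, (v j : ℕ) with hP
    have hprodIcc : ∏ j ∈ Finset.Icc 1 n, a j = P := by
      have h1 : Finset.Icc 1 n = Finset.Ico 1 (n + 1) := by
        rw [Finset.Ico_add_one_right_eq_Icc]
      rw [h1, Finset.prod_Ico_eq_prod_range]
      have h2 : n + 1 - 1 = n := by omega
      rw [h2, hP, ← Fin.prod_univ_eq_prod_range (fun i => a (1 + i)) n]
      refine Finset.prod_congr rfl fun j _ => ?_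
      have hcond : 1 ≤ 1 + (j : ℕ) ∧ 1 + (j : ℕ) ≤ n := ⟨by omega, by omega⟩
      rw [ha]
      show seqOf n v (1 + (j : ℕ)) = (v j : ℕ)
      rw [seqOf, dif_pos hcond]
      simp [Nat.add_sub_cancel_left]
    have hPq : P ≤ q := hprodIcc ▸ prod_le_qd_aux a n hn
    have hP1 : 1 ≤ P := by
      rw [hP]
      exact Finset.one_le_prod' fun j _ => (v j).one_le
    have hq1 : 1 ≤ q := le_trans hP1 hPq
    have hq0 : (0:ℝ) < (q : ℝ) := by exact_mod_cast hq1
    have hPr0 : (0:ℝ) < (P : ℝ) := by exact_mod_cast hP1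
    have hPqr : (P : ℝ) ≤ (q : ℝ) := by exact_mod_cast hPq
    -- the constraint gives Zr ^ n ≤ P ^ (ε/2)
    have hlogP : ∑ j, Real.log ((v j : ℕ) : ℝ) = Real.log (P : ℝ) := by
      rw [hP, Nat.cast_prod, Real.log_prod]
      intro j _
      have : (0:ℝ) < ((v j : ℕ) : ℝ) := by exact_mod_cast (v j).pos
      exact ne_of_gt this
    have hZP : Zr ^ n ≤ (P : ℝ) ^ (ε / 2) := by
      have h1 : Real.log (Zr ^ n) ≤ Real.log ((P : ℝ) ^ (ε / 2)) := by
        rw [Real.log_pow, Real.log_rpow hPr0]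
        calc (n : ℝ) * Real.log Zr ≤ ε / 2 * ∑ j, Real.log ((v j : ℕ) : ℝ) := hv
          _ = ε / 2 * Real.log (P : ℝ) := by rw [hlogP]
      calc Zr ^ n = Real.exp (Real.log (Zr ^ n)) := (Real.exp_log (by positivity)).symm
        _ ≤ Real.exp (Real.log ((P : ℝ) ^ (ε / 2))) := Real.exp_le_exp.2 h1
        _ = (P : ℝ) ^ (ε / 2) := Real.exp_log (Real.rpow_pos_of_pos hPr0 _)
    -- the real per-term inequality
    have hreal : (q : ℝ) ^ (-(1 + ε)) ≤
        (Zr ^ n)⁻¹ * ∏ j, ((v j : ℕ) : ℝ) ^ (-t) := by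
      have hsplit : (q : ℝ) ^ (-(1 + ε)) = (q : ℝ) ^ (-(ε / 2)) * (q : ℝ) ^ (-t) := by
        rw [← Real.rpow_add hq0]
        rw [ht]; ring_nf
      rw [hsplit]
      have h1 : (q : ℝ) ^ (-(ε / 2)) ≤ (Zr ^ n)⁻¹ := by
        rw [Real.rpow_neg (le_of_lt hq0)]
        refine inv_anti₀ (by positivity) ?_
        calc Zr ^ n ≤ (P : ℝ) ^ (ε / 2) := hZP
          _ ≤ (q : ℝ) ^ (ε / 2) := Real.rpow_le_rpow (le_of_lt hPr0) hPqr (by positivity)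
      have h2 : (q : ℝ) ^ (-t) ≤ ∏ j, ((v j : ℕ) : ℝ) ^ (-t) := by
        rw [Real.finset_prod_rpow _ _ (fun j _ => Nat.cast_nonneg _), ← Nat.cast_prod, ← hP]
        exact Real.rpow_le_rpow_of_nonpos hPr0 hPqr (by linarith)
      exact mul_le_mul h1 h2 (Real.rpow_nonneg (le_of_lt hq0) _) (by positivity)
    -- transfer to ℝ≥0∞
    calc ((q : ℝ≥0∞) ^ (-(1 + ε)))
        = ENNReal.ofReal ((q : ℝ) ^ (-(1 + ε))) := by
          rw [← ENNReal.ofReal_natCast, ENNReal.ofReal_rpow_of_pos hq0]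
      _ ≤ ENNReal.ofReal ((Zr ^ n)⁻¹ * ∏ j, ((v j : ℕ) : ℝ) ^ (-t)) :=
          ENNReal.ofReal_le_ofReal hreal
      _ = C * ∏ j, f (v j) := by
          rw [ENNReal.ofReal_mul (by positivity),
            ENNReal.ofReal_inv_of_pos (by positivity),
            ENNReal.ofReal_pow (le_of_lt hZr0),
            ENNReal.ofReal_prod_of_nonneg
              (fun j _ => Real.rpow_nonneg (Nat.cast_nonneg _) _), hC]
          congr 1
          refine Finset.prod_congr rfl fun j _ => ?_
          show ENNReal.ofReal (((v j : ℕ) : ℝ) ^ (-t)) = ((v j : ℕ) : ℝ≥0∞) ^ (-t)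
          rw [← ENNReal.ofReal_rpow_of_pos (by exact_mod_cast (v j).pos),
            ENNReal.ofReal_natCast]
  -- sum up
  refine le_trans (ENNReal.tsum_le_tsum key) ?_
  rw [ENNReal.tsum_mul_left]
  refine le_trans (mul_le_mul_right
    (ENNReal.tsum_comp_le_tsum_of_injective Subtype.val_injective
      (fun v : Fin n → ℕ+ => ∏ j, f (v j))) C) ?_
  rw [tsum_pi_prod_aux f n, hC, ← hZ, hZeq, ENNReal.inv_mul_cancel]
  · exact pow_ne_zero _ hZne0
  · exact ENNReal.pow_ne_top hZnetop
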